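/- For the hyperoctahedron in characteristic p > n or p = 0, σ_k : M^n_k → M^n_k is diagonalizable with exactly the eigenvalues k − 2j for 0 ≤ j ≤ k, and the eigenspace for k − 2j has dimension C(n,k)·C(k,j). -/

import Mathlib

open Finset

/-- A face of the hyperoctahedron on `2n` paired vertices `(i, b)`. -/
def IsFace {n : ℕ} (x : Finset (Fin n × Bool)) : Prop :=
  ∀ p ∈ x, ∀ q ∈ x, p.1 = q.1 → p.2 = q.2

instance {n : ℕ} (x : Finset (Fin n × Bool)) : Decidable (IsFace x) := by
  unfold IsFace; infer_instance

/-- The `k`-dimensional faces of the hyperoctahedron `H^n`. -/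
def FaceK (n k : ℕ) : Type :=
  {x : Finset (Fin n × Bool) // IsFace x ∧ x.card = k}

noncomputable instance (n k : ℕ) : Fintype (FaceK n k) := by
  unfold FaceK; infer_instance

/-- The opposite vertex. -/
def oppv {n : ℕ} (p : Fin n × Bool) : Fin n × Bool := (p.1, !p.2)

/-- The flip map `σₖ(x) = Σ_{γ ∈ x} ((x \ γ) ∪ {γ̄})` on the face module
`Mⁿₖ = F L^n_k`. -/
noncomputable def sigmaK (F : Type*) [Field F] (n k : ℕ) :
    Module.End F (FaceK n k →₀ F) :=
  Finsupp.lsum F fun x => LinearMap.toSpanSingleton F _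
    (∑ y ∈ Finset.univ.filter
        (fun y : FaceK n k => ∃ γ ∈ x.1, y.1 = insert (oppv γ) (x.1.erase γ)),
      Finsupp.single y (1 : F))

section Aux

variable {F : Type*} [Field F] {n k : ℕ}

instance (n k : ℕ) : DecidableEq (FaceK n k) := by
  unfold FaceK; infer_instance

/-- sign of a boolean, as a field element -/
def sgn (F : Type*) [Field F] (b : Bool) : F := if b then 1 else -1

lemma sgn_sq (b : Bool) : sgn F b * sgn F b = 1 := by cases b <;> simp [sgn]

lemma sgn_not (b : Bool) : sgn F (!b) = - sgn F b := by cases b <;> simp [sgn]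

lemma sgn_mul_ne {b c : Bool} (h : b ≠ c) : sgn F b * sgn F c = -1 := by
  cases b <;> cases c <;> simp_all [sgn]

/-- The face determined by a support `S` and a sign pattern `ε`. -/
def fcSet (S : Finset (Fin n)) (ε : ↥S → Bool) : Finset (Fin n × Bool) :=
  Finset.image (fun i : ↥S => ((i : Fin n), ε i)) Finset.univ

lemma mem_fcSet_self {S : Finset (Fin n)} (ε : ↥S → Bool) (i : ↥S) :
    ((i : Fin n), ε i) ∈ fcSet S ε := Finset.mem_image.2 ⟨i, Finset.mem_univ _, rfl⟩

lemma mem_fcSet {S : Finset (Fin n)} {ε : ↥S → Bool} {a : Fin n} {b : Bool} :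
    (a, b) ∈ fcSet S ε ↔ ∃ h : a ∈ S, ε ⟨a, h⟩ = b := by
  constructor
  · intro h
    rcases Finset.mem_image.1 h with ⟨i, -, hi⟩
    obtain ⟨i, hiS⟩ := i
    injection hi with h1 h2
    subst h1
    subst h2
    exact ⟨hiS, rfl⟩
  · rintro ⟨h, rfl⟩
    exact mem_fcSet_self ε ⟨a, h⟩

lemma card_fcSet (S : Finset (Fin n)) (ε : ↥S → Bool) : (fcSet S ε).card = S.card := by
  rw [fcSet, Finset.card_image_of_injective _
    (fun i j h => Subtype.ext (congrArg Prod.fst h)), Finset.card_univ, Fintype.card_coe]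

lemma isFace_fcSet (S : Finset (Fin n)) (ε : ↥S → Bool) : IsFace (fcSet S ε) := by
  rintro ⟨a, b⟩ hp ⟨c, d⟩ hq (h : a = c)
  subst h
  rw [mem_fcSet] at hp hq
  obtain ⟨h1, e1⟩ := hp
  obtain ⟨h2, e2⟩ := hq
  show b = d
  rw [← e1, ← e2]

/-- The face as an element of `FaceK n k`. -/
def fcFace {S : Finset (Fin n)} (hS : S.card = k) (ε : ↥S → Bool) : FaceK n k :=
  ⟨fcSet S ε, isFace_fcSet S ε, by rw [card_fcSet, hS]⟩

lemma fst_image_fcSet (S : Finset (Fin n)) (ε : ↥S → Bool) :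
    (fcSet S ε).image Prod.fst = S := by
  ext a
  constructor
  · intro h
    rcases Finset.mem_image.1 h with ⟨⟨a', b⟩, hab, rfl⟩
    exact (mem_fcSet.1 hab).1
  · intro ha
    exact Finset.mem_image.2 ⟨(a, ε ⟨a, ha⟩), mem_fcSet_self ε ⟨a, ha⟩, rfl⟩

lemma fcSet_inj_right {S : Finset (Fin n)} {ε ε' : ↥S → Bool}
    (h : fcSet S ε = fcSet S ε') : ε = ε' := by
  funext i
  have h1 := mem_fcSet_self ε i
  rw [h, mem_fcSet] at h1
  obtain ⟨hh, e⟩ := h1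
  exact e.symm

/-- Flip one sign. -/
def bflip {S : Finset (Fin n)} (i : ↥S) (ε : ↥S → Bool) : ↥S → Bool :=
  Function.update ε i (!ε i)

lemma bflip_apply_self {S : Finset (Fin n)} (i : ↥S) (ε : ↥S → Bool) :
    bflip i ε i = !ε i := Function.update_self _ _ _

lemma bflip_apply_ne {S : Finset (Fin n)} {i j : ↥S} (ε : ↥S → Bool) (h : j ≠ i) :
    bflip i ε j = ε j := Function.update_of_ne h _ _

lemma bflip_bflip {S : Finset (Fin n)} (i : ↥S) : Function.Involutive (bflip (i := i)) := by
  intro ε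
  funext j
  by_cases h : j = i
  · subst h
    simp [bflip]
  · rw [bflip_apply_ne _ h, bflip_apply_ne _ h]

lemma insert_erase_fcSet (S : Finset (Fin n)) (ε : ↥S → Bool) (i : ↥S) :
    insert (oppv ((i : Fin n), ε i)) ((fcSet S ε).erase ((i : Fin n), ε i)) =
      fcSet S (bflip i ε) := by
  ext ⟨a, b⟩
  rw [Finset.mem_insert, Finset.mem_erase, mem_fcSet, mem_fcSet]
  show (a, b) = ((i : Fin n), !ε i) ∨ _ ↔ _
  by_cases ha : a = (i : Fin n)
  · subst ha
    have hsub : ∀ h : (i : Fin n) ∈ S, (⟨(i : Fin n), h⟩ : ↥S) = i := fun _ => Subtype.ext rfl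
    constructor
    · rintro (h | ⟨hne, hh, he⟩)
      · injection h with h1 h2
        subst h2
        exact ⟨i.2, by rw [hsub i.2, bflip_apply_self]⟩
      · exact absurd (by rw [hsub hh] at he; rw [← he]) hne
    · rintro ⟨hh, he⟩
      rw [hsub hh, bflip_apply_self] at he
      left
      rw [← he]
  · constructor
    · rintro (h | ⟨hne, hh, he⟩)
      · injection h with h1 h2
        exact absurd h1 ha
      · refine ⟨hh, ?_⟩
        rw [bflip_apply_ne]
        · exact he
        · exact fun hc => ha (congrArg Subtype.val hc)
    · rintro ⟨hh, he⟩
      right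
      rw [bflip_apply_ne] at he
      · refine ⟨?_, hh, he⟩
        intro hc
        injection hc with h1 h2
        exact ha h1
      · exact fun hc => ha (congrArg Subtype.val hc)

lemma sigmaK_single {S : Finset (Fin n)} (hS : S.card = k) (ε : ↥S → Bool) :
    sigmaK F n k (Finsupp.single (fcFace hS ε) 1) =
      ∑ i : ↥S, Finsupp.single (fcFace hS (bflip i ε)) (1 : F) := by
  rw [sigmaK, Finsupp.lsum_single, LinearMap.toSpanSingleton_apply, one_smul]
  have hinj : ∀ i ∈ (Finset.univ : Finset ↥S), ∀ j ∈ Finset.univ,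
      fcFace hS (bflip i ε) = fcFace hS (bflip j ε) → i = j := by
    intro i _ j _ h
    by_contra hij
    have h1 : fcSet S (bflip i ε) = fcSet S (bflip j ε) := congrArg Subtype.val h
    have h2 := congrFun (fcSet_inj_right h1) i
    rw [bflip_apply_self, bflip_apply_ne _ hij] at h2
    simp at h2
  have hset : Finset.univ.filter
      (fun y : FaceK n k => ∃ γ ∈ (fcFace hS ε).1, y.1 = insert (oppv γ) ((fcFace hS ε).1.erase γ)) =
      Finset.image (fun i : ↥S => fcFace hS (bflip i ε)) Finset.univ := by
    ext y
    rw [Finset.mem_filter, Finset.mem_image]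
    constructor
    · rintro ⟨-, γ, hγ, hy⟩
      rcases Finset.mem_image.1 hγ with ⟨i, -, rfl⟩
      refine ⟨i, Finset.mem_univ i, ?_⟩
      apply Subtype.ext
      rw [hy]
      exact (insert_erase_fcSet S ε i).symm
    · rintro ⟨i, -, rfl⟩
      exact ⟨Finset.mem_univ _, ((i : Fin n), ε i), mem_fcSet_self ε i,
        (insert_erase_fcSet S ε i).symm⟩
  rw [hset, Finset.sum_image hinj]

end Aux

section Chi

variable {F : Type*} [Field F] {n k : ℕ}

/-- Character of the sign group. -/
def chi (F : Type*) [Field F] {n : ℕ} (S : Finset (Fin n)) (ε τ : ↥S → Bool) : F :=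
  ∏ i : ↥S, if τ i then sgn F (ε i) else 1

lemma chi_flip {S : Finset (Fin n)} (ε τ : ↥S → Bool) (i : ↥S) :
    chi F S (bflip i ε) τ = (if τ i then (-1 : F) else 1) * chi F S ε τ := by
  unfold chi
  rw [← Finset.prod_erase_mul _ _ (Finset.mem_univ i),
      ← Finset.prod_erase_mul _ _ (Finset.mem_univ i)]
  have h1 : (∏ x ∈ Finset.univ.erase i, if τ x then sgn F (bflip i ε x) else 1) =
      ∏ x ∈ Finset.univ.erase i, if τ x then sgn F (ε x) else 1 :=
    Finset.prod_congr rfl fun x hx => by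
      rw [bflip_apply_ne _ (Finset.ne_of_mem_erase hx)]
  have h2 : (if τ i then sgn F (bflip i ε i) else 1) =
      (if τ i then (-1 : F) else 1) * (if τ i then sgn F (ε i) else 1) := by
    cases hτ : τ i <;> simp [bflip_apply_self, sgn_not]
  rw [h1, h2]
  ring

lemma chi_orth {S : Finset (Fin n)} (hS : S.card = k) (ε ε' : ↥S → Bool) :
    ∑ τ : ↥S → Bool, chi F S ε τ * chi F S ε' τ = if ε' = ε then (2 : F) ^ k else 0 := by
  have step1 : ∀ τ : ↥S → Bool, chi F S ε τ * chi F S ε' τ =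
      ∏ i : ↥S, (if τ i then sgn F (ε i) * sgn F (ε' i) else 1) := by
    intro τ
    rw [chi, chi, ← Finset.prod_mul_distrib]
    exact Finset.prod_congr rfl fun i _ => by cases hτ : τ i <;> simp
  rw [Finset.sum_congr rfl fun τ _ => step1 τ]
  have key := Finset.prod_univ_sum (fun _ : ↥S => (Finset.univ : Finset Bool))
    (fun i b => if b then sgn F (ε i) * sgn F (ε' i) else 1)
  rw [Fintype.piFinset_univ] at key
  rw [← key]
  by_cases h : ε' = ε
  · rw [if_pos h, h]
    have h2 : ∀ i : ↥S, (∑ b : Bool, if b then sgn F (ε i) * sgn F (ε i) else 1) = 2 := by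
      intro i
      rw [Fintype.sum_bool, if_pos rfl, if_neg (by simp), sgn_sq]
      norm_num
    rw [Finset.prod_congr rfl fun i _ => h2 i, Finset.prod_const, Finset.card_univ,
      Fintype.card_coe, hS]
  · rw [if_neg h]
    have hex : ∃ i, ε i ≠ ε' i := by
      by_contra hc
      push_neg at hc
      exact h (funext fun i => (hc i).symm)
    obtain ⟨i, hi⟩ := hex
    refine Finset.prod_eq_zero (Finset.mem_univ i) ?_
    rw [Fintype.sum_bool, if_pos rfl, if_neg (by simp), sgn_mul_ne hi]
    ring

/-- Candidate eigenvector. -/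
noncomputable def evec (F : Type*) [Field F] {n k : ℕ} {S : Finset (Fin n)}
    (hS : S.card = k) (τ : ↥S → Bool) : FaceK n k →₀ F :=
  ∑ ε : ↥S → Bool, Finsupp.single (fcFace hS ε) (chi F S ε τ)

lemma sigmaK_evec {S : Finset (Fin n)} (hS : S.card = k) (τ : ↥S → Bool) :
    sigmaK F n k (evec F hS τ) =
      ((k : F) - 2 * (((Finset.univ.filter fun i : ↥S => τ i = true)).card : F)) •
        evec F hS τ := by
  have hcard : Fintype.card ↥S = k := by rw [Fintype.card_coe, hS]
  rw [evec, map_sum]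
  have step1 : ∀ ε : ↥S → Bool,
      sigmaK F n k (Finsupp.single (fcFace hS ε) (chi F S ε τ)) =
        ∑ i : ↥S, Finsupp.single (fcFace hS (bflip i ε)) (chi F S ε τ) := by
    intro ε
    have h1 : Finsupp.single (fcFace hS ε) (chi F S ε τ) =
        chi F S ε τ • Finsupp.single (fcFace hS ε) (1 : F) := by
      rw [Finsupp.smul_single', mul_one]
    rw [h1, map_smul, sigmaK_single hS ε, Finset.smul_sum]
    exact Finset.sum_congr rfl fun i _ => by rw [Finsupp.smul_single', mul_one]
  rw [Finset.sum_congr rfl fun ε _ => step1 ε, Finset.sum_comm]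
  have step2 : ∀ i : ↥S,
      (∑ ε : ↥S → Bool, Finsupp.single (fcFace hS (bflip i ε)) (chi F S ε τ)) =
        (if τ i then (-1 : F) else 1) • evec F hS τ := by
    intro i
    rw [evec, Finset.smul_sum]
    refine Fintype.sum_equiv (Function.Involutive.toPerm _ (bflip_bflip i)) _ _ fun ε => ?_
    show Finsupp.single (fcFace hS (bflip i ε)) (chi F S ε τ) =
      (if τ i then (-1 : F) else 1) • Finsupp.single (fcFace hS (bflip i ε)) (chi F S (bflip i ε) τ)
    rw [Finsupp.smul_single', chi_flip]
    congr 1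
    cases hτ : τ i <;> simp
  rw [Finset.sum_congr rfl fun i _ => step2 i, ← Finset.sum_smul]
  congr 1
  rw [Finset.sum_ite, Finset.sum_const, Finset.sum_const]
  have hj : (Finset.univ.filter fun i : ↥S => τ i = true).card ≤ k := by
    refine le_trans (Finset.card_filter_le _ _) ?_
    rw [Finset.card_univ, hcard]
  have hnot : (Finset.univ.filter fun i : ↥S => ¬ τ i = true).card =
      k - (Finset.univ.filter fun i : ↥S => τ i = true).card := by
    have := Finset.card_filter_add_card_filter_not
      (s := (Finset.univ : Finset ↥S)) (fun i : ↥S => τ i = true)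
    rw [Finset.card_univ, hcard] at this
    omega
  rw [hnot, nsmul_eq_mul, nsmul_eq_mul, Nat.cast_sub hj]
  ring

end Chi

section Fam

variable {F : Type*} [Field F] {n k : ℕ}

/-- Index type for the eigenbasis: a support plus a sign character. -/
def FIdx (n k : ℕ) : Type :=
  Σ S : {S : Finset (Fin n) // S.card = k}, (↥S.1 → Bool)

noncomputable instance (n k : ℕ) : Fintype (FIdx n k) := by
  unfold FIdx; infer_instance

/-- The face associated to an index. -/
def fcIdx (x : FIdx n k) : FaceK n k := fcFace x.1.2 x.2

lemma exists_fc (x : FaceK n k) :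
    ∃ (S : Finset (Fin n)) (hS : S.card = k) (ε : ↥S → Bool), fcFace hS ε = x := by
  obtain ⟨x, hface, hcard⟩ := x
  refine ⟨x.image Prod.fst, ?_, fun i => decide (((i : Fin n), true) ∈ x), ?_⟩
  · rw [Finset.card_image_of_injOn, hcard]
    intro p hp q hq hpq
    exact Prod.ext hpq (hface p hp q hq hpq)
  · apply Subtype.ext
    show fcSet _ _ = x
    have key : ∀ a b, (a, b) ∈ x → decide ((a, true) ∈ x) = b := by
      intro a b hab
      cases b with
      | true => simp [hab]
      | false =>
        have hnt : ((a, true) ∉ x) := fun hmem => by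
          have := hface _ hmem _ hab rfl
          simp at this
        simp [hnt]
    ext ⟨a, b⟩
    rw [mem_fcSet]
    constructor
    · rintro ⟨h, rfl⟩
      rcases Finset.mem_image.1 h with ⟨⟨a', b'⟩, hab', ha⟩
      dsimp at ha
      subst ha
      rw [key a' b' hab']
      exact hab'
    · intro hab
      exact ⟨Finset.mem_image.2 ⟨(a, b), hab, rfl⟩, key a b hab⟩

lemma fcIdx_bij : Function.Bijective (fcIdx (n := n) (k := k)) := by
  constructor
  · rintro ⟨⟨S, hS⟩, ε⟩ ⟨⟨S', hS'⟩, ε'⟩ h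
    have h1 : fcSet S ε = fcSet S' ε' := congrArg Subtype.val h
    have hSS : S = S' := by rw [← fst_image_fcSet S ε, h1, fst_image_fcSet]
    subst hSS
    have hεε := fcSet_inj_right h1
    subst hεε
    rfl
  · intro x
    obtain ⟨S, hS, ε, he⟩ := exists_fc x
    exact ⟨⟨⟨S, hS⟩, ε⟩, he⟩

lemma card_FIdx : Fintype.card (FIdx n k) = Fintype.card (FaceK n k) :=
  Fintype.card_of_bijective fcIdx_bij

/-- The eigenbasis family. -/
noncomputable def Bv (F : Type*) [Field F] (n k : ℕ) (x : FIdx n k) : FaceK n k →₀ F :=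
  evec F x.1.2 x.2

/-- The number of minus signs of an index. -/
def jIdx (x : FIdx n k) : ℕ := (Finset.univ.filter fun i : ↥x.1.1 => x.2 i = true).card

lemma jIdx_le (x : FIdx n k) : jIdx x ≤ k := by
  refine le_trans (Finset.card_filter_le _ _) ?_
  rw [Finset.card_univ, Fintype.card_coe, x.1.2]

lemma sigmaK_Bv (x : FIdx n k) :
    sigmaK F n k (Bv F n k x) = ((k : F) - 2 * (jIdx x : F)) • Bv F n k x :=
  sigmaK_evec x.1.2 x.2

lemma fourier_single {S : Finset (Fin n)} (hS : S.card = k) (h2 : (2 : F) ≠ 0) (ε : ↥S → Bool) :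
    Finsupp.single (fcFace hS ε) (1 : F) =
      ((2 : F) ^ k)⁻¹ • ∑ τ : ↥S → Bool, chi F S ε τ • evec F hS τ := by
  have key : ∑ τ : ↥S → Bool, chi F S ε τ • evec F hS τ =
      Finsupp.single (fcFace hS ε) ((2 : F) ^ k) := by
    unfold evec
    simp_rw [Finset.smul_sum, Finsupp.smul_single']
    rw [Finset.sum_comm]
    have h3 : ∀ ε' : ↥S → Bool,
        (∑ τ : ↥S → Bool, Finsupp.single (fcFace hS ε') (chi F S ε τ * chi F S ε' τ)) =
          Finsupp.single (fcFace hS ε') (if ε' = ε then (2 : F) ^ k else 0) := by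
      intro ε'
      rw [← chi_orth hS ε ε']
      exact (map_sum (Finsupp.singleAddHom (fcFace hS ε')) _ _).symm
    rw [Finset.sum_congr rfl fun ε' _ => h3 ε']
    rw [Finset.sum_congr rfl fun ε' _ => by
      rw [apply_ite (Finsupp.single (fcFace hS ε')), Finsupp.single_zero]]
    rw [Finset.sum_ite_eq' Finset.univ ε fun ε' => Finsupp.single (fcFace hS ε') ((2:F)^k)]
    rw [if_pos (Finset.mem_univ ε)]
  rw [key, Finsupp.smul_single', inv_mul_cancel₀ (pow_ne_zero _ h2)]

lemma top_le_span_Bv (h2 : (2 : F) ≠ 0) :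
    ⊤ ≤ Submodule.span F (Set.range (Bv F n k)) := by
  intro v _
  have hv : v.sum Finsupp.single = v := Finsupp.sum_single v
  rw [← hv, Finsupp.sum]
  refine Submodule.sum_mem _ fun a _ => ?_
  have h1 : Finsupp.single a (v a) = (v a) • Finsupp.single a (1 : F) := by
    rw [Finsupp.smul_single', mul_one]
  rw [h1]
  refine Submodule.smul_mem _ _ ?_
  obtain ⟨S, hS, ε, rfl⟩ := exists_fc a
  rw [fourier_single hS h2 ε]
  refine Submodule.smul_mem _ _ (Submodule.sum_mem _ fun τ _ => Submodule.smul_mem _ _ ?_)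
  exact Submodule.subset_span ⟨⟨⟨S, hS⟩, τ⟩, rfl⟩

lemma indep_Bv (h2 : (2 : F) ≠ 0) : LinearIndependent F (Bv F n k) :=
  linearIndependent_of_top_le_span_of_card_eq_finrank (top_le_span_Bv h2)
    (by rw [card_FIdx, Module.finrank_finsupp_self])

lemma card_jIdx (j : ℕ) :
    Fintype.card {x : FIdx n k // jIdx x = j} = n.choose k * k.choose j := by
  have e : {x : FIdx n k // jIdx x = j} ≃
      Σ S : {S : Finset (Fin n) // S.card = k},
        {τ : ↥S.1 → Bool // (Finset.univ.filter fun i : ↥S.1 => τ i = true).card = j} :=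
    { toFun := fun x => ⟨x.1.1, x.1.2, x.2⟩
      invFun := fun y => ⟨⟨y.1, y.2.1⟩, y.2.2⟩
      left_inv := fun x => rfl
      right_inv := fun y => rfl }
  rw [Fintype.card_congr e, Fintype.card_sigma]
  have h1 : ∀ S : {S : Finset (Fin n) // S.card = k},
      Fintype.card {τ : ↥S.1 → Bool // (Finset.univ.filter fun i : ↥S.1 => τ i = true).card = j}
        = k.choose j := by
    intro S
    have e2 : {τ : ↥S.1 → Bool // (Finset.univ.filter fun i : ↥S.1 => τ i = true).card = j} ≃
        {T : Finset ↥S.1 // T.card = j} :=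
      { toFun := fun τ => ⟨Finset.univ.filter fun i => τ.1 i = true, τ.2⟩
        invFun := fun T => ⟨fun i => decide (i ∈ T.1), by
          have h : (Finset.univ.filter fun i : ↥S.1 => decide (i ∈ T.1) = true) = T.1 := by
            ext i
            simp
          rw [h]
          exact T.2⟩
        left_inv := fun τ => Subtype.ext (funext fun i => by simp)
        right_inv := fun T => Subtype.ext (by ext i; simp) }
    rw [Fintype.card_congr e2, Fintype.card_finset_len, Fintype.card_coe, S.2]
  rw [Finset.sum_congr rfl fun S _ => h1 S, Finset.sum_const, Finset.card_univ,
    Fintype.card_finset_len, Fintype.card_fin, smul_eq_mul]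

end Fam

theorem stmt_12 {F : Type*} [Field F] (p n k : ℕ) [CharP F p]
    (hp : p = 0 ∨ n < p) (hk : k ≤ n) (hn : 2 ≤ n) :
    (⨆ μ : F, Module.End.eigenspace (sigmaK F n k) μ) = ⊤ ∧
    (∀ μ : F, Module.End.HasEigenvalue (sigmaK F n k) μ ↔
        ∃ j ≤ k, μ = (k : F) - 2 * (j : F)) ∧
    (∀ j ≤ k, Module.finrank F
        (Module.End.eigenspace (sigmaK F n k) ((k : F) - 2 * (j : F)))
      = n.choose k * k.choose j) := by
  have hF2 : (2 : F) ≠ 0 := by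
    rcases hp with h0 | hlt
    · subst h0
      haveI : CharZero F := CharP.charP_to_charZero F
      exact two_ne_zero
    · have hprime : p.Prime := (CharP.char_is_prime_or_zero F p).resolve_right (by omega)
      intro h2
      have hd : p ∣ 2 := (CharP.cast_eq_zero_iff F p 2).1 (by exact_mod_cast h2)
      have := Nat.le_of_dvd (by norm_num) hd
      omega
  have hcast : ∀ a, a ≤ n → ∀ b, b ≤ n → (a : F) = (b : F) → a = b := by
    intro a ha b hb h
    rcases hp with h0 | hlt
    · subst h0
      haveI : CharZero F := CharP.charP_to_charZero F
      exact_mod_cast h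
    · exact CharP.natCast_injOn_Iio F p (Set.mem_Iio.2 (by omega)) (Set.mem_Iio.2 (by omega)) h
  have hμinj : ∀ a, a ≤ k → ∀ b, b ≤ k → (k : F) - 2 * (a : F) = (k : F) - 2 * (b : F) → a = b := by
    intro a ha b hb h
    have h1 : (2 : F) * (a : F) = 2 * (b : F) := sub_right_inj.mp h
    exact hcast a (ha.trans hk) b (hb.trans hk) (mul_left_cancel₀ hF2 h1)
  have hindep : LinearIndependent F (Bv F n k) := indep_Bv hF2
  set f := sigmaK F n k with hf
  let Sp : ℕ → Submodule F (FaceK n k →₀ F) := fun j =>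
    Submodule.span F (Set.range fun x : {x : FIdx n k // jIdx x = j} => Bv F n k x.1)
  have hSpEig : ∀ j : ℕ, Sp j ≤ Module.End.eigenspace f ((k : F) - 2 * (j : F)) := by
    intro j
    rw [Submodule.span_le]
    rintro - ⟨x, rfl⟩
    rw [SetLike.mem_coe, Module.End.mem_eigenspace_iff, hf, sigmaK_Bv, x.2]
  have hSpTop : (⨆ i : Fin (k + 1), Sp (i : ℕ)) = ⊤ := by
    refine le_antisymm le_top (le_trans (top_le_span_Bv hF2) ?_)
    rw [Submodule.span_le]
    rintro - ⟨x, rfl⟩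
    refine SetLike.mem_coe.2 (Submodule.mem_iSup_of_mem ⟨jIdx x, Nat.lt_succ_of_le (jIdx_le x)⟩ ?_)
    exact Submodule.subset_span ⟨⟨x, rfl⟩, rfl⟩
  have hEigSp : ∀ j, j ≤ k → Module.End.eigenspace f ((k : F) - 2 * (j : F)) = Sp j := by
    intro j hj
    refine le_antisymm ?_ (hSpEig j)
    intro v hv
    have hvT : v ∈ (⨆ i : Fin (k + 1), Sp (i : ℕ)) := by rw [hSpTop]; trivial
    have hle : (⨆ i : Fin (k + 1), Sp (i : ℕ)) ≤
        Sp j ⊔ (⨆ ν ∈ {ν : F | ν ≠ (k : F) - 2 * (j : F)}, Module.End.eigenspace f ν) := by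
      refine iSup_le fun i => ?_
      by_cases hij : (i : ℕ) = j
      · rw [hij]
        exact le_sup_left
      · refine le_trans (hSpEig (i : ℕ)) (le_trans (le_biSup _ ?_) le_sup_right)
        exact fun hc => hij (hμinj _ (Nat.lt_succ_iff.mp i.2) _ hj hc)
    rcases Submodule.mem_sup.1 (hle hvT) with ⟨a, ha, b, hb, hab⟩
    have hbeig : b ∈ Module.End.eigenspace f ((k : F) - 2 * (j : F)) := by
      have h1 : b = v - a := by rw [← hab]; abel
      rw [h1]
      exact Submodule.sub_mem _ hv (hSpEig j ha)
    have hdisj := (Module.End.eigenspaces_iSupIndep f).disjoint_biSup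
      (x := (k : F) - 2 * (j : F)) (y := {ν : F | ν ≠ (k : F) - 2 * (j : F)}) (by simp)
    have hb0 : b = 0 := Submodule.disjoint_def.1 hdisj b hbeig hb
    rw [← hab, hb0, add_zero]
    exact ha
  have hdim : ∀ j, j ≤ k → Module.finrank F
      (Module.End.eigenspace f ((k : F) - 2 * (j : F))) = n.choose k * k.choose j := by
    intro j hj
    rw [hEigSp j hj]
    have hsub : LinearIndependent F fun x : {x : FIdx n k // jIdx x = j} => Bv F n k x.1 :=
      hindep.comp Subtype.val Subtype.val_injective
    rw [show Sp j = Submodule.span F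
      (Set.range fun x : {x : FIdx n k // jIdx x = j} => Bv F n k x.1) from rfl]
    rw [finrank_span_eq_card hsub, card_jIdx]
  refine ⟨?_, ?_, hdim⟩
  · refine le_antisymm le_top ?_
    rw [← hSpTop]
    exact iSup_le fun i => le_trans (hSpEig (i : ℕ)) (le_iSup _ _)
  · intro ν
    constructor
    · intro hν
      by_contra hc
      push_neg at hc
      rw [Module.End.hasEigenvalue_iff] at hν
      apply hν
      have hdisj := (Module.End.eigenspaces_iSupIndep f).disjoint_biSup
        (x := ν) (y := {ρ : F | ρ ≠ ν}) (by simp)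
      refine (Submodule.eq_bot_iff _).2 fun v hv => ?_
      have hvT : v ∈ (⨆ i : Fin (k + 1), Sp (i : ℕ)) := by rw [hSpTop]; trivial
      have hle : (⨆ i : Fin (k + 1), Sp (i : ℕ)) ≤
          ⨆ ρ ∈ {ρ : F | ρ ≠ ν}, Module.End.eigenspace f ρ := by
        refine iSup_le fun i => le_trans (hSpEig (i : ℕ)) (le_biSup _ ?_)
        exact Set.mem_setOf.2 (hc (i : ℕ) (Nat.lt_succ_iff.mp i.2)).symm
      exact Submodule.disjoint_def.1 hdisj v hv (hle hvT)
    · rintro ⟨j, hj, rfl⟩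
      rw [Module.End.hasEigenvalue_iff]
      intro hbot
      have h0 := hdim j hj
      rw [hbot, finrank_bot] at h0
      have hpos : 0 < n.choose k * k.choose j :=
        Nat.mul_pos (Nat.choose_pos hk) (Nat.choose_pos hj)
      exact hpos.ne' h0.symm
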